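/- arXiv:2305.19838 — 7 statements merged into one kernel-verified Lean document; each statement's English description precedes it below -/
import Mathlib

section
/- Let v₋, v₊ be real numbers with 0 < v₋ < v₊. Then for every real a > 0, (8/3)·(v₊³ − v₋³)·a³ − (12/5)·(v₊^{5/2} − v₋^{5/2})·a² + (1/3)·(v₊^{3/2} − v₋^{3/2}) > 0. Consequently the quartic P(a) = (2/3)(v₊³ − v₋³)a⁴ − (4/5)(v₊^{5/2} − v₋^{5/2})a³ + (1/3)(v₊^{3/2} − v₋^{3/2})a − (1/8)(v₊ − v₋) is strictly increasing on (0, ∞). -/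
/-- Key algebraic inequality `125 A² C > 108 B³` in terms of `x = √v₋`, `y = √v₊`. -/
lemma key_ineq (x y : ℝ) (hx : 0 < x) (hxy : x < y) :
    108 * (y ^ 5 - x ^ 5) ^ 3 < 125 * (y ^ 6 - x ^ 6) ^ 2 * (y ^ 3 - x ^ 3) := by
  have hd : 0 < y - x := sub_pos.2 hxy
  have hid : 125 * (y ^ 6 - x ^ 6) ^ 2 * (y ^ 3 - x ^ 3) - 108 * (y ^ 5 - x ^ 5) ^ 3 =
      17 * (y - x) ^ 15 + 255 * x * (y - x) ^ 14 + 1785 * x ^ 2 * (y - x) ^ 13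
        + 7610 * x ^ 3 * (y - x) ^ 12 + 21705 * x ^ 4 * (y - x) ^ 11
        + 43125 * x ^ 5 * (y - x) ^ 10 + 60575 * x ^ 6 * (y - x) ^ 9
        + 59850 * x ^ 7 * (y - x) ^ 8 + 40275 * x ^ 8 * (y - x) ^ 7
        + 16875 * x ^ 9 * (y - x) ^ 6 + 3375 * x ^ 10 * (y - x) ^ 5 := by ring
  nlinarith [hid, pow_pos hd 15, mul_pos hx (pow_pos hd 14),
    mul_pos (pow_pos hx 2) (pow_pos hd 13), mul_pos (pow_pos hx 3) (pow_pos hd 12),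
    mul_pos (pow_pos hx 4) (pow_pos hd 11), mul_pos (pow_pos hx 5) (pow_pos hd 10),
    mul_pos (pow_pos hx 6) (pow_pos hd 9), mul_pos (pow_pos hx 7) (pow_pos hd 8),
    mul_pos (pow_pos hx 8) (pow_pos hd 7), mul_pos (pow_pos hx 9) (pow_pos hd 6),
    mul_pos (pow_pos hx 10) (pow_pos hd 5)]

lemma cubic_pos (x y : ℝ) (hx : 0 < x) (hxy : x < y) (a : ℝ) (ha : 0 < a) :
    0 < 8 / 3 * (y ^ 6 - x ^ 6) * a ^ 3 - 12 / 5 * (y ^ 5 - x ^ 5) * a ^ 2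
        + 1 / 3 * (y ^ 3 - x ^ 3) := by
  set A := y ^ 6 - x ^ 6 with hAdef
  set B := y ^ 5 - x ^ 5 with hBdef
  set C := y ^ 3 - x ^ 3 with hCdef
  have hy : 0 < y := hx.trans hxy
  have hA : 0 < A := sub_pos.2 (pow_lt_pow_left₀ hxy hx.le (by norm_num))
  have hB : 0 < B := sub_pos.2 (pow_lt_pow_left₀ hxy hx.le (by norm_num))
  have hkey := key_ineq x y hx hxy
  have hid : 375 * A ^ 2 * (8 / 3 * A * a ^ 3 - 12 / 5 * B * a ^ 2 + 1 / 3 * C) =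
      4 * (5 * A * a - 3 * B) ^ 2 * (10 * A * a + 3 * B) + (125 * A ^ 2 * C - 108 * B ^ 3) := by
    ring
  have hsq : 0 ≤ 4 * (5 * A * a - 3 * B) ^ 2 * (10 * A * a + 3 * B) := by positivity
  have hkey' : 108 * B ^ 3 < 125 * A ^ 2 * C := by
    rw [hAdef, hBdef, hCdef]; exact key_ineq x y hx hxy
  have h2 : 0 < 375 * A ^ 2 * (8 / 3 * A * a ^ 3 - 12 / 5 * B * a ^ 2 + 1 / 3 * C) := by
    rw [hid]; linarith
  have hA2 : (0 : ℝ) < 375 * A ^ 2 := by positivity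
  by_contra hcon
  push_neg at hcon
  nlinarith [h2, mul_nonneg hA2.le (neg_nonneg.2 hcon)]

lemma rpow_half (v : ℝ) (hv : 0 < v) (n : ℕ) :
    v ^ ((n : ℝ) / 2) = Real.sqrt v ^ n := by
  rw [Real.sqrt_eq_rpow, ← Real.rpow_natCast (v ^ ((1 : ℝ) / 2)) n, ← Real.rpow_mul hv.le]
  congr 1
  ring

/-- The cubic `P′(a)` is positive for every `a > 0`, hence the quartic `P` is
strictly increasing on `(0, ∞)`. -/
theorem quartic_deriv_pos_and_strictMono (vm vp : ℝ) (h0 : 0 < vm) (h1 : vm < vp)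
    (P : ℝ → ℝ)
    (hP : ∀ a : ℝ, P a =
      2 / 3 * (vp ^ 3 - vm ^ 3) * a ^ 4
        - 4 / 5 * (vp ^ ((5 : ℝ) / 2) - vm ^ ((5 : ℝ) / 2)) * a ^ 3
        + 1 / 3 * (vp ^ ((3 : ℝ) / 2) - vm ^ ((3 : ℝ) / 2)) * a
        - 1 / 8 * (vp - vm)) :
    (∀ a : ℝ, 0 < a →
      0 < 8 / 3 * (vp ^ 3 - vm ^ 3) * a ^ 3
            - 12 / 5 * (vp ^ ((5 : ℝ) / 2) - vm ^ ((5 : ℝ) / 2)) * a ^ 2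
            + 1 / 3 * (vp ^ ((3 : ℝ) / 2) - vm ^ ((3 : ℝ) / 2))) ∧
    StrictMonoOn P (Set.Ioi 0) := by
  have hvp : 0 < vp := h0.trans h1
  set x := Real.sqrt vm with hxdef
  set y := Real.sqrt vp with hydef
  have hx : 0 < x := Real.sqrt_pos.2 h0
  have hxy : x < y := Real.sqrt_lt_sqrt h0.le h1
  have hm3 : vm ^ ((3 : ℝ) / 2) = x ^ 3 := by simpa using rpow_half vm h0 3
  have hp3 : vp ^ ((3 : ℝ) / 2) = y ^ 3 := by simpa using rpow_half vp hvp 3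
  have hm5 : vm ^ ((5 : ℝ) / 2) = x ^ 5 := by simpa using rpow_half vm h0 5
  have hp5 : vp ^ ((5 : ℝ) / 2) = y ^ 5 := by simpa using rpow_half vp hvp 5
  have hm6 : vm ^ 3 = x ^ 6 := by
    rw [hxdef, show (6 : ℕ) = 2 * 3 from rfl, pow_mul, Real.sq_sqrt h0.le]
  have hp6 : vp ^ 3 = y ^ 6 := by
    rw [hydef, show (6 : ℕ) = 2 * 3 from rfl, pow_mul, Real.sq_sqrt hvp.le]
  have hcubic : ∀ a : ℝ, 0 < a →
      0 < 8 / 3 * (vp ^ 3 - vm ^ 3) * a ^ 3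
            - 12 / 5 * (vp ^ ((5 : ℝ) / 2) - vm ^ ((5 : ℝ) / 2)) * a ^ 2
            + 1 / 3 * (vp ^ ((3 : ℝ) / 2) - vm ^ ((3 : ℝ) / 2)) := by
    intro a ha
    rw [hm3, hp3, hm5, hp5, hm6, hp6]
    exact cubic_pos x y hx hxy a ha
  refine ⟨hcubic, ?_⟩
  have hPf : P = fun a => 2 / 3 * (vp ^ 3 - vm ^ 3) * a ^ 4
        - 4 / 5 * (vp ^ ((5 : ℝ) / 2) - vm ^ ((5 : ℝ) / 2)) * a ^ 3
        + 1 / 3 * (vp ^ ((3 : ℝ) / 2) - vm ^ ((3 : ℝ) / 2)) * a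
        - 1 / 8 * (vp - vm) := funext hP
  have hder : ∀ a : ℝ, HasDerivAt P
      (8 / 3 * (vp ^ 3 - vm ^ 3) * a ^ 3
        - 12 / 5 * (vp ^ ((5 : ℝ) / 2) - vm ^ ((5 : ℝ) / 2)) * a ^ 2
        + 1 / 3 * (vp ^ ((3 : ℝ) / 2) - vm ^ ((3 : ℝ) / 2))) a := by
    intro a
    rw [hPf]
    have h4 := (hasDerivAt_pow 4 a).const_mul (2 / 3 * (vp ^ 3 - vm ^ 3))
    have h3 := (hasDerivAt_pow 3 a).const_mul
      (4 / 5 * (vp ^ ((5 : ℝ) / 2) - vm ^ ((5 : ℝ) / 2)))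
    have hlin := (hasDerivAt_id a).const_mul
      (1 / 3 * (vp ^ ((3 : ℝ) / 2) - vm ^ ((3 : ℝ) / 2)))
    have := ((h4.sub h3).add hlin).sub_const (1 / 8 * (vp - vm))
    refine this.congr_deriv ?_
    push_cast
    ring
  apply strictMonoOn_of_deriv_pos (convex_Ioi 0)
  · exact Continuous.continuousOn (by rw [hPf]; fun_prop)
  · intro a ha
    rw [interior_Ioi] at ha
    rw [(hder a).deriv]
    exact hcubic a ha
end

section
/- Let v₋, v₊ be real numbers with 0 < v₋ < v₊, and define P(a) = (2/3)(v₊³ − v₋³)a⁴ − (4/5)(v₊^{5/2} − v₋^{5/2})a³ + (1/3)(v₊^{3/2} − v₋^{3/2})a − (1/8)(v₊ − v₋). Then there exists a unique real a > 0 such that P(a) = 0. -/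
open MeasureTheory intervalIntegral Set

/-- The scaled one-variable quartic `f t = 2(t-1/2)³(t+1/2)` is strictly
increasing on `[0, ∞)`. -/
private lemma quartic_f_strict (s t : ℝ) (hs : 0 ≤ s) (hst : s < t) :
    2*s^4 - 2*s^3 + s/2 - 1/8 < 2*t^4 - 2*t^3 + t/2 - 1/8 := by
  have ht : 0 < t := lt_of_le_of_lt hs hst
  nlinarith [mul_nonneg hs (sq_nonneg (2*s-1)), mul_nonneg hs (sq_nonneg (2*t-1)),
    mul_nonneg ht.le (sq_nonneg (2*s-1)), mul_nonneg ht.le (sq_nonneg (2*t-1)),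
    mul_pos (sub_pos.2 hst) (sub_pos.2 hst),
    mul_nonneg (sub_pos.2 hst).le (sq_nonneg (2*s-1)),
    mul_nonneg (sub_pos.2 hst).le (sq_nonneg (2*t-1)),
    mul_nonneg (sub_pos.2 hst).le (sq_nonneg (s+t-1)),
    sq_nonneg (s+t-1), sq_nonneg (2*s-1), sq_nonneg (2*t-1)]

private noncomputable def qint (a v : ℝ) : ℝ :=
  (2*a^4) * v^(2:ℕ) - (2*a^3) * v^((3:ℝ)/2) + ((1/2*a) * v^((1:ℝ)/2) - 1/8)

private lemma quartic_f_pos (t : ℝ) (ht : 1 < t) :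
    0 < 2*t^4 - 2*t^3 + t/2 - 1/8 := by nlinarith [sq_nonneg (t-1)]

set_option maxHeartbeats 1000000 in
/-- The quartic `P` has a unique positive real root. -/
theorem quartic_unique_positive_root (vm vp : ℝ) (h0 : 0 < vm) (h1 : vm < vp)
    (P : ℝ → ℝ)
    (hP : ∀ a : ℝ, P a =
      2 / 3 * (vp ^ 3 - vm ^ 3) * a ^ 4
        - 4 / 5 * (vp ^ ((5 : ℝ) / 2) - vm ^ ((5 : ℝ) / 2)) * a ^ 3
        + 1 / 3 * (vp ^ ((3 : ℝ) / 2) - vm ^ ((3 : ℝ) / 2)) * a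
        - 1 / 8 * (vp - vm)) :
    ∃! a : ℝ, 0 < a ∧ P a = 0 := by
  -- the pointwise integrand
  have hg : ∀ a v : ℝ, qint a v =
    (2*a^4) * v^(2:ℕ) - (2*a^3) * v^((3:ℝ)/2) + ((1/2*a) * v^((1:ℝ)/2) - 1/8) :=
    fun a v => rfl
  -- integrability of each piece
  have hsub : uIcc vm vp ⊆ Ioi (0:ℝ) := by
    rw [uIcc_of_le h1.le]
    exact fun x hx => lt_of_lt_of_le h0 hx.1
  have hco : ∀ r : ℝ, ContinuousOn (fun v : ℝ => v ^ r) (uIcc vm vp) := by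
    intro r
    exact ContinuousOn.rpow_const continuousOn_id
      (fun x hx => Or.inl (ne_of_gt (hsub hx)))
  have int1 : ∀ a : ℝ, IntervalIntegrable (fun v => (2*a^4) * v^(2:ℕ)) volume vm vp :=
    fun a => (Continuous.intervalIntegrable (by continuity) vm vp)
  have int2 : ∀ a : ℝ, IntervalIntegrable (fun v => (2*a^3) * v^((3:ℝ)/2)) volume vm vp :=
    fun a => ((continuousOn_const.mul (hco ((3:ℝ)/2))).intervalIntegrable)
  have int3 : ∀ a : ℝ, IntervalIntegrable (fun v => (1/2*a) * v^((1:ℝ)/2) - 1/8) volume vm vp :=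
    fun a => (((continuousOn_const.mul (hco ((1:ℝ)/2))).sub continuousOn_const).intervalIntegrable)
  have hint : ∀ a : ℝ, IntervalIntegrable (qint a) volume vm vp :=
    fun a => ((int1 a).sub (int2 a)).add (int3 a)
  -- the integral of g a equals P a
  have hrep : ∀ a : ℝ, (∫ v in vm..vp, qint a v) = P a := by
    intro a
    have e1 : ∫ v in vm..vp, (2*a^4) * v^(2:ℕ) = (2*a^4) * ((vp^3 - vm^3)/3) := by
      rw [intervalIntegral.integral_const_mul, integral_pow]; norm_num
    have e2 : ∫ v in vm..vp, (2*a^3) * v^((3:ℝ)/2)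
        = (2*a^3) * ((vp ^ ((5:ℝ)/2) - vm ^ ((5:ℝ)/2))/(5/2)) := by
      rw [intervalIntegral.integral_const_mul, integral_rpow (Or.inl (by norm_num))]
      norm_num
    have e3 : ∫ v in vm..vp, ((1/2*a) * v^((1:ℝ)/2) - 1/8)
        = (1/2*a) * ((vp ^ ((3:ℝ)/2) - vm ^ ((3:ℝ)/2))/(3/2)) - (vp - vm) * (1/8) := by
      rw [intervalIntegral.integral_sub
            (show IntervalIntegrable (fun v : ℝ => (1/2*a) * v^((1:ℝ)/2)) volume vm vp from
              (continuousOn_const.mul (hco ((1:ℝ)/2))).intervalIntegrable)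
            (intervalIntegrable_const),
          intervalIntegral.integral_const_mul, integral_rpow (Or.inl (by norm_num)),
          intervalIntegral.integral_const, smul_eq_mul]
      norm_num
    simp only [hg]
    rw [intervalIntegral.integral_add ((int1 a).sub (int2 a)) (int3 a),
        intervalIntegral.integral_sub (int1 a) (int2 a), e1, e2, e3, hP a]
    ring
  -- pointwise description of g via sqrt
  have hpt : ∀ v : ℝ, 0 < v → ∀ a : ℝ,
      qint a v = 2*(Real.sqrt v * a)^4 - 2*(Real.sqrt v * a)^3
        + (Real.sqrt v * a)/2 - 1/8 := by
    intro v hv a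
    have h1' : Real.sqrt v = v ^ ((1:ℝ)/2) := Real.sqrt_eq_rpow v
    have e3 : (v ^ ((1:ℝ)/2))^(3:ℕ) = v^((3:ℝ)/2) := by
      rw [← Real.rpow_natCast (v ^ ((1:ℝ)/2)) 3, ← Real.rpow_mul hv.le]
      norm_num
    have e4 : (v ^ ((1:ℝ)/2))^(4:ℕ) = v^(2:ℕ) := by
      rw [← Real.rpow_natCast (v ^ ((1:ℝ)/2)) 4, ← Real.rpow_mul hv.le,
        show ((1:ℝ)/2 * (4:ℕ) = ((2:ℕ):ℝ)) by norm_num, Real.rpow_natCast]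
    simp only [hg, h1', mul_pow, e3, e4]
    ring
  -- strict monotonicity of P on positives
  have hmono : ∀ x y : ℝ, 0 < x → x < y → P x < P y := by
    intro x y hx hxy
    rw [← hrep x, ← hrep y, ← sub_pos,
        ← intervalIntegral.integral_sub (hint y) (hint x)]
    apply intervalIntegral_pos_of_pos_on (((hint y).sub (hint x))) _ h1
    intro v hv
    have hvpos : 0 < v := h0.trans hv.1
    have hsv : 0 < Real.sqrt v := Real.sqrt_pos.2 hvpos
    rw [hpt v hvpos x, hpt v hvpos y, sub_pos]
    exact quartic_f_strict _ _ (mul_nonneg hsv.le hx.le)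
      (by exact mul_lt_mul_of_pos_left hxy hsv)
  -- a point where P is positive
  set b : ℝ := 2 / Real.sqrt vm with hb
  have hsvm : 0 < Real.sqrt vm := Real.sqrt_pos.2 h0
  have hbpos : 0 < b := by positivity
  have hPb : 0 < P b := by
    rw [← hrep b]
    apply intervalIntegral_pos_of_pos_on (hint b) _ h1
    intro v hv
    have hvpos : 0 < v := h0.trans hv.1
    rw [hpt v hvpos b]
    apply quartic_f_pos
    have hsv : Real.sqrt vm ≤ Real.sqrt v := Real.sqrt_le_sqrt hv.1.le
    calc (1:ℝ) < 2 := one_lt_two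
      _ = Real.sqrt vm * b := by rw [hb]; field_simp
      _ ≤ Real.sqrt v * b := by
          exact mul_le_mul_of_nonneg_right hsv hbpos.le
  -- P 0 < 0
  have hP0 : P 0 < 0 := by
    rw [hP 0]
    norm_num
    linarith
  -- continuity of P
  have hPc : Continuous P := by
    have : P = fun a : ℝ =>
      2 / 3 * (vp ^ 3 - vm ^ 3) * a ^ 4
        - 4 / 5 * (vp ^ ((5 : ℝ) / 2) - vm ^ ((5 : ℝ) / 2)) * a ^ 3
        + 1 / 3 * (vp ^ ((3 : ℝ) / 2) - vm ^ ((3 : ℝ) / 2)) * a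
        - 1 / 8 * (vp - vm) := funext hP
    rw [this]; continuity
  -- existence by IVT
  obtain ⟨a, ha_mem, ha_eq⟩ := intermediate_value_Ioo (le_of_lt hbpos)
    (hPc.continuousOn) (show (0:ℝ) ∈ Ioo (P 0) (P b) from ⟨hP0, hPb⟩)
  refine ⟨a, ⟨ha_mem.1, ha_eq⟩, ?_⟩
  rintro y ⟨hy, hyeq⟩
  rcases lt_trichotomy y a with h | h | h
  · exfalso
    have := hmono y a hy h
    rw [hyeq, ha_eq] at this
    exact lt_irrefl 0 this
  · exact h
  · exfalso
    have := hmono a y ha_mem.1 h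
    rw [hyeq, ha_eq] at this
    exact lt_irrefl 0 this
end

section
/- Let v₋, v₊ be real numbers with 0 < v₋ < v₊, define F(a) = ∫_{v₋}^{v₊} (√u − (a·u + 1/(4a)))² du and P(a) = (2/3)(v₊³ − v₋³)a⁴ − (4/5)(v₊^{5/2} − v₋^{5/2})a³ + (1/3)(v₊^{3/2} − v₋^{3/2})a − (1/8)(v₊ − v₋). If a* > 0 satisfies P(a*) = 0, then F(a*) ≤ F(b) for every b > 0; that is, the unique positive root of P is the global minimizer over (0, ∞) of the least-squares error of the affine overestimation a·u + 1/(4a) of √u on [v₋, v₊]. -/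
open MeasureTheory

lemma rpow_five_half (v : ℝ) (hv : 0 ≤ v) : v ^ ((5 : ℝ)/2) = Real.sqrt v ^ 5 := by
  rw [Real.sqrt_eq_rpow, ← Real.rpow_natCast (v ^ ((1:ℝ)/2)) 5, ← Real.rpow_mul hv]
  norm_num

lemma rpow_three_half (v : ℝ) (hv : 0 ≤ v) : v ^ ((3 : ℝ)/2) = Real.sqrt v ^ 3 := by
  rw [Real.sqrt_eq_rpow, ← Real.rpow_natCast (v ^ ((1:ℝ)/2)) 3, ← Real.rpow_mul hv]
  norm_num

lemma holder_aux (x y : ℝ) (hx : 0 ≤ x) (hxy : x ≤ y) :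
    20 * (y^3 - x^3)^3 ≤ 27 * (y^2 - x^2)^2 * (y^5 - x^5) := by
  have ht : 0 ≤ y - x := by linarith
  have key : 27 * (y^2 - x^2)^2 * (y^5 - x^5) - 20 * (y^3 - x^3)^3 =
      (y - x)^5 * (7*(y-x)^4 + 63*x*(y-x)^3 + 198*x^2*(y-x)^2 + 270*x^3*(y-x) + 135*x^4) := by
    ring
  nlinarith [pow_nonneg ht 5, pow_nonneg ht 4, pow_nonneg ht 3, pow_nonneg ht 2,
    mul_nonneg hx (pow_nonneg ht 3), mul_nonneg (pow_nonneg hx 2) (pow_nonneg ht 2),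
    mul_nonneg (pow_nonneg hx 3) ht, pow_nonneg hx 4,
    mul_nonneg (pow_nonneg ht 5) (mul_nonneg hx (pow_nonneg ht 3)),
    mul_nonneg (pow_nonneg ht 5) (mul_nonneg (pow_nonneg hx 2) (pow_nonneg ht 2)),
    mul_nonneg (pow_nonneg ht 5) (mul_nonneg (pow_nonneg hx 3) ht),
    mul_nonneg (pow_nonneg ht 5) (pow_nonneg hx 4),
    mul_nonneg (pow_nonneg ht 5) (pow_nonneg ht 4)]

lemma quad_nonneg (I2 I32 C D a b : ℝ) (hI2 : 0 < I2) (hI32 : 0 < I32) (hC : 0 ≤ C)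
    (hD : 0 < D) (ha : 0 < a) (hCD : C^3 ≤ 32 * D^2 * I32)
    (hcon : 2*I2*a^4 - 2*I32*a^3 + C*a - 2*D = 0) :
    0 ≤ I2*a^3*b^2 - (C*a - 2*D)*b + D*a := by
  have h0 : 0 ≤ (8*D*I32*a - C^2)^2 + C*(32*D^2*I32 - C^3) := by
    have := mul_nonneg hC (sub_nonneg.mpr hCD)
    positivity
  have hK : 0 < D * I32 := mul_pos hD hI32
  have h1 : 0 ≤ 4*D*I32*a^2 - C^2*a + 2*C*D := by nlinarith [h0, hK]
  have hdisc : (C*a - 2*D)^2 - 4*(I2*a^3)*(D*a) ≤ 0 := by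
    nlinarith [mul_nonneg ha.le h1, hcon]
  nlinarith [sq_nonneg (2*(I2*a^3)*b - (C*a - 2*D)), mul_pos hI2 (pow_pos ha 3), hdisc]

lemma integral_eval (vm vp b : ℝ) (h0 : 0 < vm) (h1 : vm ≤ vp) (hb : 0 < b) :
    (∫ u in vm..vp, (Real.sqrt u - (b * u + 1 / (4 * b))) ^ 2) =
      (3/4*vp^2 + b^2*vp^3/3 - 4*b/5*(vp^2*Real.sqrt vp) - 1/(3*b)*(vp*Real.sqrt vp)
        + vp/(16*b^2))
      - (3/4*vm^2 + b^2*vm^3/3 - 4*b/5*(vm^2*Real.sqrt vm) - 1/(3*b)*(vm*Real.sqrt vm)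
        + vm/(16*b^2)) := by
  apply intervalIntegral.integral_eq_sub_of_hasDerivAt
      (f := fun u => 3/4*u^2 + b^2*u^3/3 - 4*b/5*(u^2*Real.sqrt u) - 1/(3*b)*(u*Real.sqrt u)
        + u/(16*b^2))
  · intro u hu
    rw [Set.uIcc_of_le h1] at hu
    have hu0 : 0 < u := h0.trans_le hu.1
    have hs0 : 0 < Real.sqrt u := Real.sqrt_pos.mpr hu0
    have hsq : HasDerivAt Real.sqrt (1 / (2 * Real.sqrt u)) u := Real.hasDerivAt_sqrt hu0.ne'
    have h2 : HasDerivAt (fun u : ℝ => u^2) (2*u) u := by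
      simpa using hasDerivAt_pow 2 u
    have h3 : HasDerivAt (fun u : ℝ => u^3) (3*u^2) u := by
      simpa using hasDerivAt_pow 3 u
    have h25 : HasDerivAt (fun u : ℝ => u^2 * Real.sqrt u)
        (2*u * Real.sqrt u + u^2 * (1 / (2 * Real.sqrt u))) u := h2.mul hsq
    have h15 : HasDerivAt (fun u : ℝ => u * Real.sqrt u)
        (1 * Real.sqrt u + u * (1 / (2 * Real.sqrt u))) u := (hasDerivAt_id u).mul hsq
    have hd : HasDerivAt (fun u : ℝ => 3/4*u^2 + b^2*u^3/3 - 4*b/5*(u^2*Real.sqrt u)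
        - 1/(3*b)*(u*Real.sqrt u) + u/(16*b^2))
        (3/4*(2*u) + b^2*(3*u^2)/3 - 4*b/5*(2*u * Real.sqrt u + u^2 * (1 / (2 * Real.sqrt u)))
          - 1/(3*b)*(1 * Real.sqrt u + u * (1 / (2 * Real.sqrt u))) + 1/(16*b^2)) u := by
      exact ((((h2.const_mul (3/4:ℝ)).add ((h3.const_mul (b^2)).div_const 3)).sub
        (h25.const_mul (4*b/5))).sub (h15.const_mul (1/(3*b)))).add
        ((hasDerivAt_id u).div_const (16*b^2))
    have heq : (Real.sqrt u - (b * u + 1 / (4 * b))) ^ 2 =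
        3/4*(2*u) + b^2*(3*u^2)/3 - 4*b/5*(2*u * Real.sqrt u + u^2 * (1 / (2 * Real.sqrt u)))
          - 1/(3*b)*(1 * Real.sqrt u + u * (1 / (2 * Real.sqrt u))) + 1/(16*b^2) := by
      obtain ⟨s, hs, rfl⟩ : ∃ s : ℝ, 0 < s ∧ s^2 = u :=
        ⟨Real.sqrt u, hs0, Real.sq_sqrt hu0.le⟩
      rw [Real.sqrt_sq hs.le]
      field_simp
      ring
    exact heq ▸ hd
  · apply Continuous.intervalIntegrable
    fun_prop

set_option maxHeartbeats 1000000 in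
/-- A positive root of the quartic `P` is the global minimizer over `(0, ∞)` of the
least-squares error `F` of the affine overestimation `a·u + 1/(4a)` of `√u` on `[v₋, v₊]`. -/
theorem quartic_root_minimizes_least_squares (vm vp : ℝ) (h0 : 0 < vm) (h1 : vm < vp)
    (F P : ℝ → ℝ)
    (hF : ∀ a : ℝ, F a = ∫ u in vm..vp, (Real.sqrt u - (a * u + 1 / (4 * a))) ^ 2)
    (hP : ∀ a : ℝ, P a =
      2 / 3 * (vp ^ 3 - vm ^ 3) * a ^ 4
        - 4 / 5 * (vp ^ ((5 : ℝ) / 2) - vm ^ ((5 : ℝ) / 2)) * a ^ 3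
        + 1 / 3 * (vp ^ ((3 : ℝ) / 2) - vm ^ ((3 : ℝ) / 2)) * a
        - 1 / 8 * (vp - vm))
    (astar : ℝ) (hastar : 0 < astar) (hroot : P astar = 0) :
    ∀ b : ℝ, 0 < b → F astar ≤ F b := by
  intro b hb
  have hvm0 : (0:ℝ) ≤ vm := h0.le
  have hvp0 : (0:ℝ) ≤ vp := by linarith
  set x := Real.sqrt vm with hxdef
  set y := Real.sqrt vp with hydef
  have hx : 0 < x := Real.sqrt_pos.mpr h0
  have hy : 0 < y := Real.sqrt_pos.mpr (by linarith)
  have hxy : x < y := Real.sqrt_lt_sqrt hvm0 h1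
  have hvm : vm = x^2 := (Real.sq_sqrt hvm0).symm
  have hvp : vp = y^2 := (Real.sq_sqrt hvp0).symm
  set a := astar with hadef
  -- constraint
  have hcon : 2*((y^6-x^6)/3)*a^4 - 2*((2:ℝ)/5*(y^5-x^5))*a^3 + ((y^3-x^3)/3)*a
      - 2*((y^2-x^2)/16) = 0 := by
    have h := hroot
    rw [hP] at h
    rw [rpow_five_half vp hvp0, rpow_five_half vm hvm0, rpow_three_half vp hvp0,
      rpow_three_half vm hvm0, ← hxdef, ← hydef, hvm, hvp] at h
    linear_combination h
  -- key inequality data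
  have hI2 : 0 < (y^6-x^6)/3 := by nlinarith [pow_lt_pow_left₀ hxy hx.le (n := 6) (by norm_num)]
  have hI32 : 0 < (2:ℝ)/5*(y^5-x^5) := by nlinarith [pow_lt_pow_left₀ hxy hx.le (n := 5) (by norm_num)]
  have hCpos : (0:ℝ) ≤ (y^3-x^3)/3 := by nlinarith [pow_lt_pow_left₀ hxy hx.le (n := 3) (by norm_num)]
  have hDpos : (0:ℝ) < (y^2-x^2)/16 := by nlinarith [pow_lt_pow_left₀ hxy hx.le (n := 2) (by norm_num)]
  have hCD : ((y^3-x^3)/3)^3 ≤ 32 * ((y^2-x^2)/16)^2 * ((2:ℝ)/5*(y^5-x^5)) := by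
    have := holder_aux x y hx.le hxy.le
    nlinarith [this]
  have hq : 0 ≤ ((y^6-x^6)/3)*a^3*b^2 - (((y^3-x^3)/3)*a - 2*((y^2-x^2)/16))*b
      + ((y^2-x^2)/16)*a :=
    quad_nonneg _ _ _ _ a b hI2 hI32 hCpos hDpos hastar hCD hcon
  -- evaluate F
  have hFa : F a = (3/4*vp^2 + a^2*vp^3/3 - 4*a/5*(vp^2*y) - 1/(3*a)*(vp*y) + vp/(16*a^2))
      - (3/4*vm^2 + a^2*vm^3/3 - 4*a/5*(vm^2*x) - 1/(3*a)*(vm*x) + vm/(16*a^2)) := by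
    rw [hF]; exact integral_eval vm vp a h0 h1.le hastar
  have hFb : F b = (3/4*vp^2 + b^2*vp^3/3 - 4*b/5*(vp^2*y) - 1/(3*b)*(vp*y) + vp/(16*b^2))
      - (3/4*vm^2 + b^2*vm^3/3 - 4*b/5*(vm^2*x) - 1/(3*b)*(vm*x) + vm/(16*b^2)) := by
    rw [hF]; exact integral_eval vm vp b h0 h1.le hb
  rw [hvm, hvp] at hFa hFb
  have key : F b - F a = ((b-a)^2/(a^3*b^2)) *
      (((y^6-x^6)/3)*a^3*b^2 - (((y^3-x^3)/3)*a - 2*((y^2-x^2)/16))*b + ((y^2-x^2)/16)*a)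
      + ((b-a)/a^3) * (2*((y^6-x^6)/3)*a^4 - 2*((2:ℝ)/5*(y^5-x^5))*a^3 + ((y^3-x^3)/3)*a
        - 2*((y^2-x^2)/16)) := by
    rw [hFa, hFb]
    field_simp
    ring
  rw [hcon, mul_zero, add_zero] at key
  have hnn : 0 ≤ ((b-a)^2/(a^3*b^2)) *
      (((y^6-x^6)/3)*a^3*b^2 - (((y^3-x^3)/3)*a - 2*((y^2-x^2)/16))*b + ((y^2-x^2)/16)*a) := by
    apply mul_nonneg _ hq
    positivity
  linarith
end

section
/- Let n be a positive integer and v : {1,…,n} → ℝ with vᵢ > 0 for all i. Define v₋ = Σᵢ vᵢ, δ₋ = √(Σ_{i ≠ j} √(vᵢ·vⱼ)) (the sum over all ordered pairs i ≠ j), v₊ = (√v₋ + 2δ₋)², and a = 1 / (2(√v₋ + δ₋)). Then for every vector x : {1,…,n} → ℝ satisfying √vᵢ ≤ xᵢ for all i and Σᵢ xᵢ² ≤ v₊, one has a·(Σᵢ xᵢ²) + 1/(4a) ≤ Σᵢ xᵢ. In particular, the affine-in-the-variance exploration term a·Σᵢ σᵢ² + 1/(4a) is a tighter bound than the sum Σᵢ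 σᵢ of factor-wise standard deviations. -/
open Finset

set_option maxHeartbeats 1000000 in
/-- Theorem 1 of the paper (tighter exploration bound), with the explicit constant
`a = 1/(2(√v₋ + δ₋))`: for any vector `x` with `√vᵢ ≤ xᵢ` and `Σ xᵢ² ≤ v₊`,
`a·Σ xᵢ² + 1/(4a) ≤ Σ xᵢ`. -/
theorem affine_variance_bound_le_sum_std (n : ℕ) (hn : 0 < n)
    (v : Fin n → ℝ) (hv : ∀ i, 0 < v i)
    (vm δm vp a : ℝ)
    (hvm : vm = ∑ i, v i)
    (hδm : δm = Real.sqrt (∑ i, ∑ j ∈ univ.erase i, Real.sqrt (v i * v j)))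
    (hvp : vp = (Real.sqrt vm + 2 * δm) ^ 2)
    (ha : a = 1 / (2 * (Real.sqrt vm + δm)))
    (x : Fin n → ℝ)
    (hx : ∀ i, Real.sqrt (v i) ≤ x i)
    (hx2 : (∑ i, (x i) ^ 2) ≤ vp) :
    a * (∑ i, (x i) ^ 2) + 1 / (4 * a) ≤ ∑ i, x i := by
  have hv0 : ∀ i, (0:ℝ) ≤ v i := fun i => (hv i).le
  have : Nonempty (Fin n) := ⟨⟨0, hn⟩⟩
  have hvm0 : 0 < vm := by
    rw [hvm]; exact Finset.sum_pos (fun i _ => hv i) univ_nonempty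
  set m := Real.sqrt vm with hmdef
  have hm0 : 0 < m := Real.sqrt_pos.mpr hvm0
  have hm2 : m ^ 2 = vm := Real.sq_sqrt hvm0.le
  have hδ0 : 0 ≤ δm := hδm ▸ Real.sqrt_nonneg _
  have hδ2 : δm ^ 2 = ∑ i, ∑ j ∈ univ.erase i, Real.sqrt (v i * v j) := by
    rw [hδm, Real.sq_sqrt]
    exact Finset.sum_nonneg fun i _ =>
      Finset.sum_nonneg fun j _ => Real.sqrt_nonneg _
  set S := ∑ i, x i ^ 2 with hSdef
  have hSvm : vm ≤ S := by
    rw [hvm]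
    refine Finset.sum_le_sum fun i _ => ?_
    nlinarith [hx i, Real.sq_sqrt (hv0 i), Real.sqrt_nonneg (v i)]
  have hS0 : 0 < S := lt_of_lt_of_le hvm0 hSvm
  set u := Real.sqrt S with hudef
  have hu2 : u ^ 2 = S := Real.sq_sqrt hS0.le
  have hum : m ≤ u := Real.sqrt_le_sqrt hSvm
  have huub : u ≤ m + 2 * δm := by
    have h1 : S ≤ (m + 2*δm)^2 := by rw [← hvp]; exact hx2
    calc u ≤ Real.sqrt ((m + 2*δm)^2) := Real.sqrt_le_sqrt h1
    _ = m + 2*δm := Real.sqrt_sq (by positivity)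
  set P := ∑ i, Real.sqrt (v i) with hPdef
  have hP0 : 0 ≤ P := Finset.sum_nonneg fun i _ => Real.sqrt_nonneg _
  have hsq : ∑ i, (Real.sqrt (v i))^2 = vm := by
    rw [hvm]; exact Finset.sum_congr rfl fun i _ => Real.sq_sqrt (hv0 i)
  have hP2 : P ^ 2 = vm + δm ^ 2 := by
    have hexp : P ^ 2 = ∑ i, (Real.sqrt (v i) * Real.sqrt (v i)
        + ∑ j ∈ univ.erase i, Real.sqrt (v i) * Real.sqrt (v j)) := by
      rw [sq, hPdef, Finset.sum_mul_sum]
      exact Finset.sum_congr rfl fun i _ => (Finset.add_sum_erase _ _ (mem_univ i)).symm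
    rw [hexp, Finset.sum_add_distrib, hδ2, hvm]
    congr 1
    · exact Finset.sum_congr rfl fun i _ => Real.mul_self_sqrt (hv0 i)
    · exact Finset.sum_congr rfl fun i _ => Finset.sum_congr rfl fun j _ =>
        (Real.sqrt_mul (hv0 i) _).symm
  have hCS : ∑ i, x i * Real.sqrt (v i) ≤ u * m := by
    have h := Real.sum_mul_le_sqrt_mul_sqrt univ x (fun i => Real.sqrt (v i))
    simpa [← hSdef, ← hudef, hsq, ← hmdef] using h
  set T := ∑ i, x i with hTdef
  have hTP : P ≤ T := Finset.sum_le_sum fun i _ => hx i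
  have hyy : ∑ i, (x i - Real.sqrt (v i))^2 ≤ (T - P)^2 := by
    have h := sum_sq_le_sq_sum_of_nonneg
      (s := univ) (f := fun i => x i - Real.sqrt (v i))
      (fun i _ => sub_nonneg.mpr (hx i))
    simpa [Finset.sum_sub_distrib, ← hTdef, ← hPdef] using h
  have hexpand : ∑ i, (x i - Real.sqrt (v i))^2
      = S - 2*(∑ i, x i * Real.sqrt (v i)) + vm := by
    have h : ∀ i ∈ univ, (x i - Real.sqrt (v i))^2
        = x i ^ 2 - 2*(x i * Real.sqrt (v i)) + (Real.sqrt (v i))^2 :=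
      fun i _ => by ring
    rw [Finset.sum_congr rfl h, Finset.sum_add_distrib, Finset.sum_sub_distrib,
      ← Finset.mul_sum, hsq]
  have hTPum : u - m ≤ T - P := by
    have hlow : (u - m)^2 ≤ ∑ i, (x i - Real.sqrt (v i))^2 := by
      rw [hexpand]; nlinarith [hCS, hu2, hm2]
    nlinarith [hyy, hlow, hTP, hum]
  have hkey : 2*m^2 + 2*m*δm + δm^2 ≤ 2*(m+δm)*P := by
    have hX2 : (2*(m+δm)*P)^2 = 4*(m+δm)^2*(m^2+δm^2) := by
      rw [mul_pow, hP2, ← hm2]; ring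
    refine le_of_pow_le_pow_left₀ two_ne_zero
      (mul_nonneg (by positivity) hP0) ?_
    rw [hX2]
    nlinarith [mul_nonneg hm0.le (pow_nonneg hδ0 3), pow_nonneg hδ0 4]
  have hL0 : 0 < m + δm := by linarith
  have hgoal2 : S + (m+δm)^2 ≤ 2*(m+δm)*T := by
    have h1 : 2*(m+δm)*(u-m) ≤ 2*(m+δm)*(T-P) := by
      apply mul_le_mul_of_nonneg_left hTPum; positivity
    nlinarith [hkey, h1, hu2, mul_nonneg (sub_nonneg.mpr hum) (sub_nonneg.mpr huub)]
  have heq : a * S + 1/(4*a) = (S + (m+δm)^2) / (2*(m+δm)) := by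
    rw [ha]; field_simp; ring
  rw [heq, div_le_iff₀ (by positivity)]
  linarith [hgoal2]
end

section
/- Let (E, d) be a metric space, t a positive integer, and κ₁, …, κₜ : E → ℝ functions, each Lipschitz with constant L ≥ 0 and satisfying v₋ ≤ κⱼ(x) ≤ v₊ for all x ∈ E and all j. Let A be a symmetric real t × t matrix whose ℓ²→ℓ² operator norm is at most ρ ≥ 0, let y ∈ ℝᵗ satisfy y⁻ ≤ yⱼ ≤ y⁺ for all j, and let c ≥ 0. Define φ : E → ℝ by φ(x) = Σ_{j,l} A_{jl}·κⱼ(x)·yₗ − c·Σ_{j,l} A_{jl}·κⱼ(x)·κₗ(x). Then φ is Lipschitz with constant t · L · ρ · M, where M = max(|y⁺ − 2c·v₋|, |y⁻ − 2c·v₊|). -/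
open Finset

/-- Lipschitz constant of the local acquisition function (Proposition 3 of the paper):
if the kernel evaluations `κⱼ` are `L`-Lipschitz and take values in `[v₋, v₊]`, `A` is a
symmetric matrix of operator norm at most `ρ`, the outputs `yⱼ` lie in `[y⁻, y⁺]`, and
`c ≥ 0`, then `φ(x) = Σ_{j,l} A_{jl} κⱼ(x) yₗ − c Σ_{j,l} A_{jl} κⱼ(x) κₗ(x)` is Lipschitz
with constant `t·L·ρ·M`, where `M = max(|y⁺ − 2c·v₋|, |y⁻ − 2c·v₊|)`. -/
theorem acquisition_lipschitz {E : Type*} [MetricSpace E] (t : ℕ) (ht : 0 < t)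
    (κ : Fin t → E → ℝ) (L : ℝ) (hL : 0 ≤ L)
    (hκLip : ∀ j, ∀ x x' : E, |κ j x - κ j x'| ≤ L * dist x x')
    (vminus vplus : ℝ) (hκbd : ∀ j, ∀ x : E, vminus ≤ κ j x ∧ κ j x ≤ vplus)
    (A : Matrix (Fin t) (Fin t) ℝ) (hAsymm : A.IsSymm)
    (ρ : ℝ) (hρ : 0 ≤ ρ)
    (hAop : ∀ z : Fin t → ℝ,
      Real.sqrt (∑ i, (A.mulVec z i) ^ 2) ≤ ρ * Real.sqrt (∑ j, (z j) ^ 2))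
    (y : Fin t → ℝ) (yminus yplus : ℝ) (hy : ∀ j, yminus ≤ y j ∧ y j ≤ yplus)
    (c : ℝ) (hc : 0 ≤ c)
    (φ : E → ℝ)
    (hφ : ∀ x : E, φ x =
      (∑ j, ∑ l, A j l * κ j x * y l) - c * ∑ j, ∑ l, A j l * κ j x * κ l x)
    (M : ℝ) (hM : M = max |yplus - 2 * c * vminus| |yminus - 2 * c * vplus|) :
    ∀ x x' : E, |φ x - φ x'| ≤ t * L * ρ * M * dist x x' := by
  intro x x'
  set d := dist x x' with hd
  have hd0 : (0:ℝ) ≤ d := dist_nonneg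
  set δ : Fin t → ℝ := fun j => κ j x - κ j x' with hδ
  set w : Fin t → ℝ := fun j => y j - c * (κ j x + κ j x') with hw
  set u : Fin t → ℝ := A.mulVec w with hu
  have hsymm : ∀ j l, A j l = A l j := fun j l => (hAsymm.apply j l).symm
  -- cross-term cancellation by symmetry
  have hS : (∑ j, ∑ l, A j l * (κ j x * κ l x')) = ∑ j, ∑ l, A j l * (κ j x' * κ l x) := by
    rw [Finset.sum_comm]
    refine Finset.sum_congr rfl fun j _ => Finset.sum_congr rfl fun l _ => ?_
    rw [hsymm l j]; ring
  -- key identity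
  have hkey : φ x - φ x' = ∑ j, δ j * u j := by
    have hu' : ∀ j, u j = ∑ l, A j l * w l := fun j => rfl
    have hexpand : (∑ j, δ j * u j)
        = ∑ j, ∑ l, (δ j * (A j l * w l)) := by
      refine Finset.sum_congr rfl fun j _ => ?_
      rw [hu' j, Finset.mul_sum]
    have hterm : ∀ j l : Fin t,
        A j l * κ j x * y l - c * (A j l * κ j x * κ l x)
          - (A j l * κ j x' * y l - c * (A j l * κ j x' * κ l x'))
        = δ j * (A j l * w l)
          + (c * (A j l * (κ j x * κ l x')) - c * (A j l * (κ j x' * κ l x))) := by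
      intro j l; simp only [hδ, hw]; ring
    have hstep : φ x - φ x'
        = ∑ j, ∑ l, (A j l * κ j x * y l - c * (A j l * κ j x * κ l x)
            - (A j l * κ j x' * y l - c * (A j l * κ j x' * κ l x'))) := by
      rw [hφ x, hφ x']
      simp only [Finset.mul_sum, ← Finset.sum_sub_distrib]
    rw [hstep, hexpand]
    simp only [hterm, Finset.sum_add_distrib, Finset.sum_sub_distrib, ← Finset.mul_sum]
    rw [hS]; ring
  -- pointwise bounds
  have hδbd : ∀ j, |δ j| ≤ L * d := fun j => hκLip j x x'
  have hM0 : 0 ≤ M := le_trans (abs_nonneg _) (hM ▸ le_max_left _ _)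
  have hwbd : ∀ j, |w j| ≤ M := by
    intro j
    have h1 := (hκbd j x).1; have h2 := (hκbd j x).2
    have h3 := (hκbd j x').1; have h4 := (hκbd j x').2
    have h5 := (hy j).1; have h6 := (hy j).2
    rw [abs_le]
    constructor
    · have : yminus - 2 * c * vplus ≤ w j := by
        simp only [hw]
        have : c * (κ j x + κ j x') ≤ c * (vplus + vplus) := by
          apply mul_le_mul_of_nonneg_left (by linarith) hc
        linarith [this]
      have h7 : -(M) ≤ yminus - 2 * c * vplus := by
        have := hM ▸ le_max_right |yplus - 2 * c * vminus| |yminus - 2 * c * vplus|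
        have := neg_abs_le (yminus - 2 * c * vplus)
        linarith
      linarith
    · have : w j ≤ yplus - 2 * c * vminus := by
        simp only [hw]
        have : c * (vminus + vminus) ≤ c * (κ j x + κ j x') := by
          apply mul_le_mul_of_nonneg_left (by linarith) hc
        linarith [this]
      have h7 : yplus - 2 * c * vminus ≤ M := by
        have := hM ▸ le_max_left |yplus - 2 * c * vminus| |yminus - 2 * c * vplus|
        have := le_abs_self (yplus - 2 * c * vminus)
        linarith
      linarith
  -- sum-of-squares bounds
  have hδsq : Real.sqrt (∑ j, δ j ^ 2) ≤ Real.sqrt t * (L * d) := by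
    have h1 : (∑ j, δ j ^ 2) ≤ (t : ℝ) * (L * d) ^ 2 := by
      calc (∑ j, δ j ^ 2) ≤ ∑ _j : Fin t, (L * d) ^ 2 := by
            refine Finset.sum_le_sum fun j _ => ?_
            rw [← sq_abs]
            exact pow_le_pow_left₀ (abs_nonneg _) (hδbd j) 2
        _ = (t : ℝ) * (L * d) ^ 2 := by simp [Finset.sum_const, mul_comm]
    calc Real.sqrt (∑ j, δ j ^ 2) ≤ Real.sqrt ((t : ℝ) * (L * d) ^ 2) :=
          Real.sqrt_le_sqrt h1
      _ = Real.sqrt t * (L * d) := by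
          rw [Real.sqrt_mul (by positivity), Real.sqrt_sq (by positivity)]
  have hwsq : Real.sqrt (∑ j, w j ^ 2) ≤ Real.sqrt t * M := by
    have h1 : (∑ j, w j ^ 2) ≤ (t : ℝ) * M ^ 2 := by
      calc (∑ j, w j ^ 2) ≤ ∑ _j : Fin t, M ^ 2 := by
            refine Finset.sum_le_sum fun j _ => ?_
            rw [← sq_abs]
            exact pow_le_pow_left₀ (abs_nonneg _) (hwbd j) 2
        _ = (t : ℝ) * M ^ 2 := by simp [Finset.sum_const, mul_comm]
    calc Real.sqrt (∑ j, w j ^ 2) ≤ Real.sqrt ((t : ℝ) * M ^ 2) := Real.sqrt_le_sqrt h1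
      _ = Real.sqrt t * M := by
          rw [Real.sqrt_mul (by positivity), Real.sqrt_sq hM0]
  have husq : Real.sqrt (∑ j, u j ^ 2) ≤ ρ * (Real.sqrt t * M) :=
    le_trans (hAop w) (mul_le_mul_of_nonneg_left hwsq hρ)
  -- Cauchy-Schwarz
  have hCS : |∑ j, δ j * u j| ≤ Real.sqrt (∑ j, δ j ^ 2) * Real.sqrt (∑ j, u j ^ 2) := by
    rw [abs_le]
    refine ⟨?_, Real.sum_mul_le_sqrt_mul_sqrt Finset.univ δ u⟩
    have h2 := Real.sum_mul_le_sqrt_mul_sqrt Finset.univ (fun j => -δ j) u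
    simp only [neg_mul, Finset.sum_neg_distrib, neg_sq] at h2
    linarith
  rw [hkey]
  have hst : Real.sqrt t * Real.sqrt t = (t : ℝ) :=
    Real.mul_self_sqrt (Nat.cast_nonneg t)
  calc |∑ j, δ j * u j| ≤ Real.sqrt (∑ j, δ j ^ 2) * Real.sqrt (∑ j, u j ^ 2) := hCS
    _ ≤ (Real.sqrt t * (L * d)) * (ρ * (Real.sqrt t * M)) := by
        apply mul_le_mul hδsq husq (Real.sqrt_nonneg _)
        positivity
    _ = (Real.sqrt t * Real.sqrt t) * L * ρ * M * d := by ring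
    _ = t * L * ρ * M * d := by rw [hst]
end

section
/- Let (Ω, 𝓕, ℙ) be a probability space, D a nonempty finite set, and for each positive integer t and each x ∈ D let X_{t,x} : Ω → ℝ be a measurable random variable whose law under ℙ is the Gaussian measure with mean μ_{t,x} ∈ ℝ and variance σ_{t,x}² where σ_{t,x} > 0. Fix δ ∈ (0,1), a > 0, and set β_t = 2·log(|D|·π²·t² / (6δ)). Then ℙ( for all positive integers t and all x ∈ D, |X_{t,x} − μ_{t,x}| ≤ β_t^{1/2}·(a·σ_{t,x}² + 1/(4a)) ) ≥ 1 − δ. -/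
open MeasureTheory ProbabilityTheory
open Real Set

lemma gpdf_even (x : ℝ) : gaussianPDFReal 0 1 (-x) = gaussianPDFReal 0 1 x := by
  simp [gaussianPDFReal, neg_sq]

lemma gpdf_half : ∫ x in Ioi (0:ℝ), gaussianPDFReal 0 1 x = 1/2 := by
  have hint : Integrable (gaussianPDFReal 0 1) := integrable_gaussianPDFReal 0 1
  have h1 : ∫ x in Iic (0:ℝ), gaussianPDFReal 0 1 x = ∫ x in Ioi (0:ℝ), gaussianPDFReal 0 1 x := by
    have := integral_comp_neg_Ioi (0:ℝ) (gaussianPDFReal 0 1)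
    simp only [neg_zero] at this
    rw [← this]
    exact setIntegral_congr_fun measurableSet_Ioi fun x _ => (gpdf_even x)
  have h2 : (∫ x in Iic (0:ℝ), gaussianPDFReal 0 1 x) + ∫ x in Ioi (0:ℝ), gaussianPDFReal 0 1 x
      = ∫ x, gaussianPDFReal 0 1 x :=
    intervalIntegral.integral_Iic_add_Ioi hint.integrableOn hint.integrableOn
  rw [integral_gaussianPDFReal_eq_one 0 one_ne_zero] at h2
  linarith

lemma gpdf_shift (c : ℝ) :
    ∫ x in Ioi c, gaussianPDFReal c 1 x = ∫ x in Ioi (0:ℝ), gaussianPDFReal 0 1 x := by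
  have hmp := measurePreserving_add_right (volume : Measure ℝ) c
  have hemb : MeasurableEmbedding (· + c) := (MeasurableEquiv.addRight c).measurableEmbedding
  have := hmp.setIntegral_preimage_emb hemb (gaussianPDFReal c 1) (Ioi c)
  rw [← this]
  have hpre : (· + c) ⁻¹' Ioi c = Ioi (0:ℝ) := by ext y; simp
  rw [hpre]
  refine setIntegral_congr_fun measurableSet_Ioi fun x _ => ?_
  rw [gaussianPDFReal_add x c]
  simp

lemma std_gaussian_tail {c : ℝ} (hc : 0 ≤ c) :
    gaussianReal 0 1 {y : ℝ | c < |y|} ≤ ENNReal.ofReal (Real.exp (-(c^2)/2)) := by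
  rw [gaussianReal_apply_eq_integral 0 one_ne_zero]
  refine ENNReal.ofReal_le_ofReal ?_
  have hint : Integrable (gaussianPDFReal 0 1) := integrable_gaussianPDFReal 0 1
  have hintc : Integrable (gaussianPDFReal c 1) := integrable_gaussianPDFReal c 1
  have hS : {y : ℝ | c < |y|} = Iio (-c) ∪ Ioi c := by
    ext y
    simp only [mem_setOf_eq, mem_union, mem_Iio, mem_Ioi, lt_abs, lt_neg, or_comm]
  have hdisj : Disjoint (Iio (-c)) (Ioi c) := by
    refine Set.disjoint_left.mpr fun y hy1 hy2 => ?_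
    simp only [mem_Iio, mem_Ioi] at hy1 hy2
    linarith
  have hsplit : ∫ x in {y : ℝ | c < |y|}, gaussianPDFReal 0 1 x
      = (∫ x in Iio (-c), gaussianPDFReal 0 1 x) + ∫ x in Ioi c, gaussianPDFReal 0 1 x := by
    rw [hS, setIntegral_union hdisj measurableSet_Ioi hint.integrableOn hint.integrableOn]
  have hIio : ∫ x in Iio (-c), gaussianPDFReal 0 1 x = ∫ x in Ioi c, gaussianPDFReal 0 1 x := by
    rw [Measure.restrict_congr_set Iio_ae_eq_Iic, ← integral_comp_neg_Ioi c (gaussianPDFReal 0 1)]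
    exact setIntegral_congr_fun measurableSet_Ioi fun x _ => (gpdf_even x)
  have hkey : ∫ x in Ioi c, gaussianPDFReal 0 1 x ≤ Real.exp (-(c^2)/2) * (1/2) := by
    have hmono : ∫ x in Ioi c, gaussianPDFReal 0 1 x
        ≤ ∫ x in Ioi c, Real.exp (-(c^2)/2) * gaussianPDFReal c 1 x := by
      refine setIntegral_mono_on hint.integrableOn (hintc.const_mul _).integrableOn
        measurableSet_Ioi fun x hx => ?_
      simp only [mem_Ioi] at hx
      simp only [gaussianPDFReal, NNReal.coe_one, mul_one, sub_zero]
      rw [mul_comm (Real.exp (-(c^2)/2)), mul_assoc, ← Real.exp_add]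
      refine mul_le_mul_of_nonneg_left (Real.exp_le_exp.mpr ?_) (by positivity)
      nlinarith
    rw [integral_const_mul, gpdf_shift, gpdf_half] at hmono
    exact hmono
  calc ∫ x in {y : ℝ | c < |y|}, gaussianPDFReal 0 1 x
      = 2 * ∫ x in Ioi c, gaussianPDFReal 0 1 x := by rw [hsplit, hIio]; ring
    _ ≤ 2 * (Real.exp (-(c^2)/2) * (1/2)) := by linarith
    _ = Real.exp (-(c^2)/2) := by ring

set_option maxHeartbeats 2000000 in
/-- Concentration lemma (Lemma 2 of the paper): if for each time `t ≥ 1` and each point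
`x` of a finite domain `D` the random variable `X t x` is Gaussian with mean `μ t x` and
variance `σ t x ^ 2`, then with `β_t = 2 log(|D|π²t²/(6δ))`, with probability at least
`1 − δ`, simultaneously for all `t` and `x`,
`|X t x − μ t x| ≤ β_t^{1/2}·(a·σ t x² + 1/(4a))`. -/
theorem concentration_lemma {Ω : Type*} [MeasurableSpace Ω]
    (P : Measure Ω) [IsProbabilityMeasure P]
    {D : Type*} [Fintype D] [Nonempty D]
    (X : ℕ+ → D → Ω → ℝ) (μ : ℕ+ → D → ℝ) (σ : ℕ+ → D → ℝ)
    (hσ : ∀ t x, 0 < σ t x)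
    (hXmeas : ∀ t x, Measurable (X t x))
    (hlaw : ∀ t x, Measure.map (X t x) P = gaussianReal (μ t x) ⟨(σ t x) ^ 2, sq_nonneg _⟩)
    (δ : ℝ) (hδ : δ ∈ Set.Ioo (0 : ℝ) 1) (a : ℝ) (ha : 0 < a)
    (β : ℕ+ → ℝ)
    (hβ : ∀ t : ℕ+, β t =
      2 * Real.log ((Fintype.card D : ℝ) * Real.pi ^ 2 * (t : ℝ) ^ 2 / (6 * δ))) :
    ENNReal.ofReal (1 - δ) ≤
      P {ω | ∀ (t : ℕ+) (x : D),
        |X t x ω - μ t x| ≤ Real.sqrt (β t) * (a * (σ t x) ^ 2 + 1 / (4 * a))} := by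
  obtain ⟨hδ0, hδ1⟩ := hδ
  have hπ : (3:ℝ) < π := Real.pi_gt_three
  have hcard : (1:ℝ) ≤ (Fintype.card D : ℝ) := by exact_mod_cast Fintype.card_pos
  have ht1 : ∀ t : ℕ+, (1:ℝ) ≤ (t:ℝ) := fun t => by exact_mod_cast t.one_le
  have hβpos : ∀ t, 0 < β t := by
    intro t
    rw [hβ t]
    have h1 := ht1 t
    have hlog : 0 < Real.log ((Fintype.card D : ℝ) * π ^ 2 * (t : ℝ) ^ 2 / (6 * δ)) := by
      refine Real.log_pos ?_
      rw [lt_div_iff₀ (by positivity)]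
      have h9 : (9:ℝ) ≤ π ^ 2 := by nlinarith
      have ht2 : (1:ℝ) ≤ (t:ℝ) ^ 2 := by nlinarith
      have key : (9:ℝ) ≤ (Fintype.card D : ℝ) * π ^ 2 * (t:ℝ) ^ 2 := by
        calc (9:ℝ) = 1 * 9 * 1 := by ring
          _ ≤ (Fintype.card D : ℝ) * π ^ 2 * (t:ℝ) ^ 2 := by
            refine mul_le_mul (mul_le_mul hcard h9 (by norm_num) ?_) ht2 zero_le_one (by positivity)
            linarith
      linarith
    linarith
  -- per-event tail bound
  have hbad : ∀ (t : ℕ+) (x : D),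
      P {ω | Real.sqrt (β t) * (a * (σ t x) ^ 2 + 1 / (4 * a)) < |X t x ω - μ t x|}
        ≤ ENNReal.ofReal (6 * δ / ((Fintype.card D : ℝ) * π ^ 2 * (t:ℝ) ^ 2)) := by
    intro t x
    have hs0 : 0 < σ t x := hσ t x
    set c := Real.sqrt (β t) with hcdef
    have hc0 : 0 ≤ c := Real.sqrt_nonneg _
    have hamgm : σ t x ≤ a * (σ t x) ^ 2 + 1 / (4 * a) := by
      rw [← sub_nonneg]
      have h : a * (σ t x) ^ 2 + 1 / (4 * a) - σ t x = (a * σ t x - 1/2)^2 / a := by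
        field_simp; ring
      rw [h]; positivity
    have hsub : {ω | c * (a * (σ t x) ^ 2 + 1/(4*a)) < |X t x ω - μ t x|}
        ⊆ {ω | c * σ t x < |X t x ω - μ t x|} := fun ω hω =>
      lt_of_le_of_lt (mul_le_mul_of_nonneg_left hamgm hc0) hω
    refine le_trans (measure_mono hsub) ?_
    have hSmeas : MeasurableSet {y : ℝ | c * σ t x < |y - μ t x|} :=
      ((measurable_id.sub_const (μ t x)).abs) measurableSet_Ioi
    have hmap : P {ω | c * σ t x < |X t x ω - μ t x|}
        = gaussianReal (μ t x) ⟨(σ t x) ^ 2, sq_nonneg _⟩ {y | c * σ t x < |y - μ t x|} := by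
      rw [← hlaw t x, Measure.map_apply (hXmeas t x) hSmeas]
      rfl
    rw [hmap]
    have h1 : (gaussianReal 0 1).map (fun y => σ t x * y)
        = gaussianReal 0 ⟨(σ t x) ^ 2, sq_nonneg _⟩ := by
      have := gaussianReal_map_const_mul (μ := 0) (v := 1) (σ t x)
      rw [this]; congr 1 <;> simp; rfl
    have h2 : (gaussianReal 0 (⟨(σ t x) ^ 2, sq_nonneg _⟩ : NNReal)).map (· + μ t x)
        = gaussianReal (μ t x) ⟨(σ t x) ^ 2, sq_nonneg _⟩ := by
      simpa using gaussianReal_map_add_const (μ := 0) (v := ⟨(σ t x) ^ 2, sq_nonneg _⟩) (μ t x)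
    rw [← h2, Measure.map_apply (measurable_add_const _) hSmeas, ← h1,
      Measure.map_apply (measurable_const_mul _) ((measurable_add_const _) hSmeas)]
    have hpre : (fun y => σ t x * y) ⁻¹' ((· + μ t x) ⁻¹' {y | c * σ t x < |y - μ t x|})
        = {y : ℝ | c < |y|} := by
      ext y
      simp only [Set.mem_preimage, Set.mem_setOf_eq, add_sub_cancel_right]
      rw [abs_mul, abs_of_pos hs0, mul_comm c (σ t x)]
      exact mul_lt_mul_iff_right₀ hs0
    rw [hpre]
    refine le_trans (std_gaussian_tail hc0) ?_
    have hc2 : c ^ 2 = β t := Real.sq_sqrt (hβpos t).le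
    have hApos : 0 < (Fintype.card D : ℝ) * π ^ 2 * (t:ℝ) ^ 2 / (6 * δ) := by positivity
    have hAeq : Real.exp (-(c ^ 2) / 2)
        = 6 * δ / ((Fintype.card D : ℝ) * π ^ 2 * (t:ℝ) ^ 2) := by
      rw [hc2, hβ t]
      rw [show -(2 * Real.log ((Fintype.card D : ℝ) * π ^ 2 * (t:ℝ) ^ 2 / (6 * δ))) / 2
          = -Real.log ((Fintype.card D : ℝ) * π ^ 2 * (t:ℝ) ^ 2 / (6 * δ)) from by ring]
      rw [Real.exp_neg, Real.exp_log hApos, inv_div]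
    rw [hAeq]
  -- union bound
  set E := {ω | ∀ (t : ℕ+) (x : D),
      |X t x ω - μ t x| ≤ Real.sqrt (β t) * (a * (σ t x) ^ 2 + 1 / (4 * a))} with hEdef
  have hEmeas : MeasurableSet E := by
    have hE2 : E = ⋂ (t : ℕ+) (x : D),
        {ω | |X t x ω - μ t x| ≤ Real.sqrt (β t) * (a * (σ t x) ^ 2 + 1 / (4 * a))} := by
      ext ω; simp [hEdef, Set.mem_iInter]
    rw [hE2]
    exact MeasurableSet.iInter fun t => MeasurableSet.iInter fun x =>
      measurableSet_le ((hXmeas t x).sub_const _).abs measurable_const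
  have hcompl : Eᶜ = ⋃ (p : ℕ+ × D),
      {ω | Real.sqrt (β p.1) * (a * (σ p.1 p.2) ^ 2 + 1/(4*a)) < |X p.1 p.2 ω - μ p.1 p.2|} := by
    ext ω
    simp only [Set.mem_compl_iff, hEdef, Set.mem_setOf_eq, Set.mem_iUnion, not_forall,
      not_le, Prod.exists]
  have hPEc : P Eᶜ ≤ ENNReal.ofReal δ := by
    rw [hcompl]
    refine le_trans (measure_iUnion_le _) ?_
    refine le_trans (ENNReal.tsum_le_tsum (fun p => hbad p.1 p.2)) ?_
    rw [ENNReal.tsum_prod']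
    have hinner : ∀ t : ℕ+,
        (∑' (_ : D), ENNReal.ofReal (6 * δ / ((Fintype.card D : ℝ) * π ^ 2 * (t:ℝ) ^ 2)))
        = ENNReal.ofReal (6 * δ / (π ^ 2 * (t:ℝ) ^ 2)) := by
      intro t
      rw [tsum_fintype]
      simp only [Finset.sum_const, Finset.card_univ, nsmul_eq_mul]
      rw [← ENNReal.ofReal_natCast (Fintype.card D), ← ENNReal.ofReal_mul (by positivity)]
      congr 1
      have hcard0 : ((Fintype.card D : ℝ)) ≠ 0 := by positivity
      have ht0 : ((t:ℝ)) ≠ 0 := by have := ht1 t; linarith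
      field_simp
    simp_rw [hinner]
    have hsum : HasSum (fun t : ℕ+ => 6 * δ / (π ^ 2 * (t:ℝ) ^ 2)) δ := by
      have h0 : HasSum (fun n : ℕ => (1:ℝ) / (n:ℝ) ^ 2) (π ^ 2 / 6) := hasSum_zeta_two
      have h1 : HasSum (fun t : ℕ+ => (1:ℝ) / ((t:ℕ):ℝ) ^ 2) (π ^ 2 / 6) := by
        refine (Function.Injective.hasSum_iff PNat.coe_injective ?_).mpr h0
        intro n hn
        have hn0 : n = 0 := by
          by_contra h
          exact hn ⟨⟨n, Nat.pos_of_ne_zero h⟩, rfl⟩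
        simp [hn0]
      have h2 := h1.mul_left (6 * δ / π ^ 2)
      have hπ0 : (π:ℝ) ≠ 0 := Real.pi_ne_zero
      have heq : (6 * δ / π ^ 2) * (π ^ 2 / 6) = δ := by field_simp
      rw [heq] at h2
      have h3 : (fun t : ℕ+ => 6 * δ / (π ^ 2 * (t:ℝ) ^ 2))
          = fun t : ℕ+ => (6 * δ / π ^ 2) * ((1:ℝ) / ((t:ℕ):ℝ) ^ 2) := by
        funext t
        have ht0 : ((t:ℝ)) ≠ 0 := by have := ht1 t; linarith
        push_cast
        field_simp
      rw [h3]
      exact h2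
    calc (∑' (t : ℕ+), ENNReal.ofReal (6 * δ / (π ^ 2 * (t:ℝ) ^ 2)))
        = ENNReal.ofReal (∑' (t : ℕ+), 6 * δ / (π ^ 2 * (t:ℝ) ^ 2)) :=
          (ENNReal.ofReal_tsum_of_nonneg (fun t => by positivity) hsum.summable).symm
      _ = ENNReal.ofReal δ := by rw [hsum.tsum_eq]
      _ ≤ ENNReal.ofReal δ := le_rfl
  have hPE : P E = 1 - P Eᶜ := by
    have := prob_compl_eq_one_sub (μ := P) hEmeas.compl
    rwa [compl_compl] at this
  rw [hPE, ENNReal.ofReal_sub 1 hδ0.le, ENNReal.ofReal_one]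
  exact tsub_le_tsub_left hPEc 1
end

section
/- Let D be a nonempty set, f, μ, s : D → ℝ functions, a > 0 and B ≥ 0 real numbers. Assume that |f(x) − μ(x)| ≤ B·(a·s(x)² + 1/(4a)) for every x ∈ D, and that x̂ ∈ D maximizes the acquisition function, i.e. μ(x) + B·a·s(x)² ≤ μ(x̂) + B·a·s(x̂)² for every x ∈ D. Then for every x* ∈ D, f(x*) − f(x̂) ≤ 2·B·(a·s(x̂)² + 1/(4a)). -/
/-- Deterministic core of the immediate regret bound (Theorem 3 of the paper): if the
confidence bound `|f(x) − μ(x)| ≤ B(a·s(x)² + 1/(4a))` holds on `D` and `x̂` maximizes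
the acquisition function `μ + B·a·s²`, then the regret at `x̂` is at most
`2B(a·s(x̂)² + 1/(4a))`. -/
theorem immediate_regret_bound {D : Type*} [Nonempty D]
    (f μ s : D → ℝ) (a B : ℝ) (ha : 0 < a) (hB : 0 ≤ B)
    (hconf : ∀ x : D, |f x - μ x| ≤ B * (a * (s x) ^ 2 + 1 / (4 * a)))
    (xhat : D)
    (hmax : ∀ x : D, μ x + B * a * (s x) ^ 2 ≤ μ xhat + B * a * (s xhat) ^ 2) :
    ∀ xstar : D, f xstar - f xhat ≤ 2 * B * (a * (s xhat) ^ 2 + 1 / (4 * a)) := by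
  intro xstar
  have h1 := abs_le.mp (hconf xstar)
  have h2 := abs_le.mp (hconf xhat)
  have h3 := hmax xstar
  have hpos : 0 ≤ B * (1 / (4 * a)) := by positivity
  nlinarith [h1.1, h1.2, h2.1, h2.2]
end
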